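/- Let Z_1, …, Z_n be i.i.d. real-valued random variables with moment generating function m(ζ) = E[e^{ζZ_1}] and cumulant generating function ψ = log m, let γ ∈ ℝ, γ̃ = γ/n, and let τ ∈ [0,1] satisfy m(τ) < ∞. Let U be uniformly distributed on [0,1], independent of (Z_ℓ). Let V_1, …, V_n be i.i.d. with the exponentially tilted law of Y = Z_1 − γ̃, i.e., dϑ_τ(y) = e^{τy} dF_Y(y) / E[e^{τY}], and set S = Σ_{ℓ=1}^n V_ℓ. Then P[ Σ_{ℓ=1}^n Z_ℓ ≥ γ + log U ] = e^{n ψ(τ) − τγ} ( E[e^{−τS} 1{S ≥ 0}] + E[e^{(1−τ)S} 1{S < 0}] ). -/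

import Mathlib

open MeasureTheory ProbabilityTheory Real Set

section Aux

lemma tilted_prod_add (τ : ℝ) (p q : Measure ℝ) [IsProbabilityMeasure p] [IsProbabilityMeasure q]
    (hp : Integrable (fun x => rexp (τ * x)) p) (hq : Integrable (fun x => rexp (τ * x)) q) :
    ((p.tilted (fun x => τ * x)).prod (q.tilted (fun x => τ * x))).map (fun z : ℝ × ℝ => z.1 + z.2)
      = ((p.prod q).map (fun z : ℝ × ℝ => z.1 + z.2)).tilted (fun x => τ * x) := by
  have hadd : Measurable (fun z : ℝ × ℝ => z.1 + z.2) := measurable_fst.add measurable_snd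
  have hexp : Measurable (fun x : ℝ => rexp (τ * x)) := measurable_exp.comp (measurable_const_mul τ)
  set Mp := ∫ x, rexp (τ * x) ∂p with hMp_def
  set Mq := ∫ x, rexp (τ * x) ∂q with hMq_def
  have hMp : 0 < Mp := integral_exp_pos hp
  have hMq : 0 < Mq := integral_exp_pos hq
  have hptilt : IsProbabilityMeasure (p.tilted (fun x => τ * x)) := isProbabilityMeasure_tilted hp
  have hqtilt : IsProbabilityMeasure (q.tilted (fun x => τ * x)) := isProbabilityMeasure_tilted hq
  have h1 : (p.tilted (fun x => τ * x)).prod (q.tilted (fun x => τ * x))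
      = (p.prod q).withDensity
          (fun z => ENNReal.ofReal (rexp (τ * (z.1 + z.2)) / (Mp * Mq))) := by
    refine (Measure.prod_eq fun s t hs ht => ?_)
    rw [withDensity_apply _ (hs.prod ht), ← Measure.prod_restrict]
    have : ∀ z : ℝ × ℝ, ENNReal.ofReal (rexp (τ * (z.1 + z.2)) / (Mp * Mq))
        = ENNReal.ofReal (rexp (τ * z.1) / Mp) * ENNReal.ofReal (rexp (τ * z.2) / Mq) := by
      intro z
      rw [← ENNReal.ofReal_mul (by positivity), div_mul_div_comm, ← Real.exp_add, mul_add]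
    simp_rw [this]
    rw [lintegral_prod_mul (f := fun x => ENNReal.ofReal (rexp (τ * x) / Mp))
      (g := fun x => ENNReal.ofReal (rexp (τ * x) / Mq))
      ((hexp.div_const Mp).ennreal_ofReal).aemeasurable
      ((hexp.div_const Mq).ennreal_ofReal).aemeasurable,
      tilted_apply' _ _ hs, tilted_apply' _ _ ht]
  rw [h1]
  have h2 : ((p.prod q).withDensity
        (fun z => ENNReal.ofReal (rexp (τ * (z.1 + z.2)) / (Mp * Mq)))).map
          (fun z : ℝ × ℝ => z.1 + z.2)
      = (((p.prod q)).map (fun z : ℝ × ℝ => z.1 + z.2)).withDensity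
          (fun x => ENNReal.ofReal (rexp (τ * x) / (Mp * Mq))) := by
    ext s hs
    rw [Measure.map_apply hadd hs, withDensity_apply _ (hadd hs),
      withDensity_apply _ hs, setLIntegral_map (f := fun x => ENNReal.ofReal (rexp (τ * x) / (Mp * Mq)))
        hs ((hexp.div_const _).ennreal_ofReal) hadd]
  rw [h2]
  have h3 : ∫ x, rexp (τ * x) ∂((p.prod q).map (fun z : ℝ × ℝ => z.1 + z.2)) = Mp * Mq := by
    rw [integral_map hadd.aemeasurable hexp.aestronglyMeasurable]
    have : ∀ z : ℝ × ℝ, rexp (τ * (z.1 + z.2)) = rexp (τ * z.1) * rexp (τ * z.2) := fun z => by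
      rw [← Real.exp_add, mul_add]
    simp_rw [this]
    exact integral_prod_mul (L := ℝ) (fun x => rexp (τ * x)) (fun y => rexp (τ * y))
  rw [Measure.tilted, h3]

lemma iIndep_of_option {Ω : Type*} [MeasurableSpace Ω] {μ : Measure Ω} {U : Ω → ℝ} {Z : ℕ → Ω → ℝ}
    (h : iIndepFun
      (fun i : Option ℕ => i.elim U Z) μ) :
    iIndepFun Z μ := by
  rw [iIndepFun_iff_measure_inter_preimage_eq_mul] at h ⊢
  intro s sets hsets
  classical
  have := h (s.map ⟨some, Option.some_injective ℕ⟩)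
    (sets := fun o => o.elim Set.univ sets) ?_
  · have h1 : (⋂ i ∈ s.map ⟨some, Option.some_injective ℕ⟩,
        (fun i : Option ℕ => i.elim U Z) i ⁻¹' (Option.elim i Set.univ sets)) =
        ⋂ ℓ ∈ s, Z ℓ ⁻¹' sets ℓ := by
      ext ω; simp [Finset.mem_map]
    rw [h1, Finset.prod_map] at this
    simpa using this
  · rintro (_ | ℓ) hi
    · exact MeasurableSet.univ
    · simp only [Finset.mem_map, Function.Embedding.coeFn_mk] at hi
      obtain ⟨a, ha, heq⟩ := hi
      obtain rfl : a = ℓ := Option.some_injective ℕ heq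
      exact hsets a ha

lemma map_sum_range_succ {Ω : Type*} [MeasurableSpace Ω] (μ : Measure Ω) [IsProbabilityMeasure μ]
    (X : ℕ → Ω → ℝ) (hmeas : ∀ i, Measurable (X i))
    (hX : iIndepFun X μ) (k : ℕ) :
    μ.map (fun ω => ∑ ℓ ∈ Finset.range (k+1), X ℓ ω)
      = (((μ.map (fun ω => ∑ ℓ ∈ Finset.range k, X ℓ ω)).prod (μ.map (X k)))).map
          (fun z : ℝ × ℝ => z.1 + z.2) := by
  have hsum : Measurable (fun ω => ∑ ℓ ∈ Finset.range k, X ℓ ω) := by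
    exact Finset.measurable_sum _ (fun i _ => hmeas i)
  have hip : IndepFun (∑ ℓ ∈ Finset.range k, X ℓ) (X k) μ :=
    hX.indepFun_sum_range_succ hmeas k
  have hip' : IndepFun (fun ω => ∑ ℓ ∈ Finset.range k, X ℓ ω) (X k) μ := by
    have : (∑ ℓ ∈ Finset.range k, X ℓ) = fun ω => ∑ ℓ ∈ Finset.range k, X ℓ ω := by
      funext ω; simp [Finset.sum_apply]
    rwa [this] at hip
  rw [← (indepFun_iff_map_prod_eq_prod_map_map hsum.aemeasurable (hmeas k).aemeasurable).mp hip',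
    Measure.map_map (g := fun z : ℝ × ℝ => z.1 + z.2) (measurable_fst.add measurable_snd) (hsum.prodMk (hmeas k))]
  congr 1
  funext ω
  simp [Finset.sum_range_succ]

lemma law_sum_tilted {Ω : Type*} [MeasurableSpace Ω] {μ : Measure Ω} [IsProbabilityMeasure μ]
    {Ω' : Type*} [MeasurableSpace Ω'] {ν : Measure Ω'} [IsProbabilityMeasure ν]
    {Z : ℕ → Ω → ℝ} {V : ℕ → Ω' → ℝ} {τ c : ℝ}
    (hmeasZ : ∀ ℓ, Measurable (Z ℓ)) (hmeasV : ∀ ℓ, Measurable (V ℓ))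
    (hindepZ : iIndepFun Z μ)
    (hidentZ : ∀ ℓ, IdentDistrib (Z ℓ) (Z 0) μ μ)
    (hmgf : Integrable (fun ω => Real.exp (τ * Z 0 ω)) μ)
    (hindepV : iIndepFun V ν)
    (hlawV : ∀ ℓ, ν.map (V ℓ) = (μ.map (fun ω => Z 0 ω - c)).tilted (fun y => τ * y))
    (k : ℕ) :
    ν.map (fun ω' => ∑ ℓ ∈ Finset.range k, V ℓ ω')
      = (μ.map (fun ω => ∑ ℓ ∈ Finset.range k, (Z ℓ ω - c))).tilted (fun y => τ * y) := by
  have hexpm : Measurable (fun x : ℝ => rexp (τ * x)) :=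
    measurable_exp.comp (measurable_const_mul τ)
  -- basic facts
  set Z' : ℕ → Ω → ℝ := fun ℓ ω => Z ℓ ω - c with hZ'def
  have hmeasZ' : ∀ ℓ, Measurable (Z' ℓ) := fun ℓ => (hmeasZ ℓ).sub measurable_const
  have hindepZ' : iIndepFun Z' μ :=
    hindepZ.comp (fun _ x => x - c) (fun _ => measurable_id.sub measurable_const)
  have hidentZ' : ∀ ℓ, IdentDistrib (Z' ℓ) (Z' 0) μ μ :=
    fun ℓ => (hidentZ ℓ).comp (measurable_id.sub measurable_const)
  have hexpint : ∀ ℓ, Integrable (fun ω => rexp (τ * Z' ℓ ω)) μ := by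
    intro ℓ
    have h0 : Integrable (fun ω => rexp (τ * Z' 0 ω)) μ := by
      have : (fun ω => rexp (τ * Z' 0 ω)) = fun ω => rexp (τ * Z 0 ω) * rexp (-(τ * c)) := by
        funext ω; rw [← Real.exp_add]; congr 1; simp [hZ'def]; ring
      rw [this]; exact hmgf.mul_const _
    have hid : IdentDistrib (fun ω => rexp (τ * Z' ℓ ω)) (fun ω => rexp (τ * Z' 0 ω)) μ μ :=
      (hidentZ' ℓ).comp (measurable_exp.comp (measurable_const_mul τ))
    exact hid.integrable_iff.mpr h0
  have hsum_meas : ∀ k, Measurable (fun ω => ∑ ℓ ∈ Finset.range k, Z' ℓ ω) :=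
    fun k => Finset.measurable_sum _ (fun i _ => hmeasZ' i)
  have hsum_int : ∀ k : ℕ, Integrable (fun x => rexp (τ * x))
      (μ.map (fun ω => ∑ ℓ ∈ Finset.range k, Z' ℓ ω)) := by
    intro k
    rw [integrable_map_measure (g := fun x : ℝ => rexp (τ * x)) hexpm.aestronglyMeasurable
      (hsum_meas k).aemeasurable]
    simp only [Function.comp_def]
    have := hindepZ'.integrable_exp_mul_sum (t := τ) hmeasZ' (s := Finset.range k)
      (fun i _ => hexpint i)
    simpa [Finset.sum_apply] using this
  have hlaw0 : ∀ ℓ, μ.map (Z' ℓ) = μ.map (Z' 0) := fun ℓ => ((hidentZ' ℓ)).map_eq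
  -- induction
  induction k with
  | zero =>
      simp only [Finset.range_zero, Finset.sum_empty]
      have h1 : ν.map (fun _ : Ω' => (0:ℝ)) = Measure.dirac 0 := by
        simp [Measure.map_const]
      have h2 : μ.map (fun _ : Ω => (0:ℝ)) = Measure.dirac 0 := by
        simp [Measure.map_const]
      rw [h1, h2]
      have : (fun y : ℝ => τ * y) =ᵐ[Measure.dirac (0:ℝ)] (fun _ => (0:ℝ)) := by
        rw [ae_dirac_eq]
        exact Filter.eventually_pure.mpr (by simp)
      rw [tilted_congr this, tilted_const]
  | succ k ih =>
      have hstepV := map_sum_range_succ ν V hmeasV hindepV k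
      have hstepZ := map_sum_range_succ μ Z' hmeasZ' hindepZ' k
      rw [hstepV, ih, hlawV k, hstepZ, hlaw0 k]
      have heq : μ.map (Z' 0) = μ.map (fun ω => Z 0 ω - c) := rfl
      rw [heq]
      haveI : IsProbabilityMeasure (μ.map (fun ω => ∑ ℓ ∈ Finset.range k, (Z ℓ ω - c))) :=
        Measure.isProbabilityMeasure_map (hsum_meas k).aemeasurable
      haveI : IsProbabilityMeasure (μ.map (fun ω => Z 0 ω - c)) :=
        Measure.isProbabilityMeasure_map (hmeasZ' 0).aemeasurable
      exact tilted_prod_add τ _ _ (hsum_int k) (by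
        rw [integrable_map_measure (g := fun x : ℝ => rexp (τ * x)) hexpm.aestronglyMeasurable
          (hmeasZ' 0).aemeasurable]
        simp only [Function.comp_def]
        exact hexpint 0)

lemma unif_slice (t : ℝ) :
    (volume.restrict (Icc (0:ℝ) 1)) {u | Real.log u ≤ t} = ENNReal.ofReal (min 1 (rexp t)) := by
  rw [Measure.restrict_congr_set (Ioc_ae_eq_Icc).symm,
    Measure.restrict_apply (measurableSet_le Real.measurable_log measurable_const)]
  have h : {u : ℝ | Real.log u ≤ t} ∩ Ioc 0 1 = Ioc 0 (min 1 (rexp t)) := by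
    ext u
    simp only [mem_inter_iff, mem_setOf_eq, mem_Ioc, le_min_iff]
    constructor
    · rintro ⟨hlog, hu0, hu1⟩
      exact ⟨hu0, hu1, (Real.log_le_iff_le_exp hu0).mp hlog⟩
    · rintro ⟨hu0, hu1, hue⟩
      exact ⟨(Real.log_le_iff_le_exp hu0).mpr hue, hu0, hu1⟩
  rw [h, Real.volume_Ioc, sub_zero]

end Aux

/-- The change-of-measure identity for the RCUs-type tail probability with the extra
`log U` term (`U` uniform on `[0,1]`, independent of the `Z`'s):
`P[Σ Z_ℓ ≥ γ + log U] = e^{nψ(τ) - τγ} ( E[e^{-τS} 1{S ≥ 0}] + E[e^{(1-τ)S} 1{S < 0}] )`,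
where `S = Σ V_ℓ` and the `V_ℓ` are i.i.d. with the exponentially tilted law of
`Y = Z_1 - γ/n`.  The mutual independence of `U` and the `Z`'s is expressed by the
family indexed by `Option ℕ` (index `none ↦ U`, `some ℓ ↦ Z ℓ`). -/
theorem tilting_probability_identity_with_logU
    {Ω : Type*} [MeasurableSpace Ω] (μ : Measure Ω) [IsProbabilityMeasure μ]
    {Ω' : Type*} [MeasurableSpace Ω'] (ν : Measure Ω') [IsProbabilityMeasure ν]
    (n : ℕ) (hn : 1 ≤ n) (Z : ℕ → Ω → ℝ) (U : Ω → ℝ) (V : ℕ → Ω' → ℝ)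
    (hmeasZ : ∀ ℓ, Measurable (Z ℓ)) (hmeasU : Measurable U)
    (hmeasV : ∀ ℓ, Measurable (V ℓ))
    (hU : μ.map U = (volume : Measure ℝ).restrict (Set.Icc 0 1))
    (hindep : iIndepFun
      (fun i : Option ℕ => i.elim U Z) μ)
    (hidentZ : ∀ ℓ, IdentDistrib (Z ℓ) (Z 0) μ μ)
    (γ : ℝ) (τ : ℝ) (hτ : τ ∈ Set.Icc (0 : ℝ) 1)
    (hmgf : Integrable (fun ω => Real.exp (τ * Z 0 ω)) μ)
    (hindepV : iIndepFun V ν)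
    (hlawV : ∀ ℓ, ν.map (V ℓ) =
      (μ.map (fun ω => Z 0 ω - γ / n)).tilted (fun y => τ * y)) :
    (μ {ω | γ + Real.log (U ω) ≤ ∑ ℓ ∈ Finset.range n, Z ℓ ω}).toReal =
      Real.exp ((n : ℝ) * cgf (Z 0) μ τ - τ * γ) *
        ((∫ ω' in {ω' | 0 ≤ ∑ ℓ ∈ Finset.range n, V ℓ ω'},
            Real.exp (-τ * ∑ ℓ ∈ Finset.range n, V ℓ ω') ∂ν) +
          ∫ ω' in {ω' | ∑ ℓ ∈ Finset.range n, V ℓ ω' < 0},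
            Real.exp ((1 - τ) * ∑ ℓ ∈ Finset.range n, V ℓ ω') ∂ν) := by
  classical
  have hexpm : Measurable (fun x : ℝ => rexp (τ * x)) :=
    measurable_exp.comp (measurable_const_mul τ)
  set T : Ω → ℝ := fun ω => ∑ ℓ ∈ Finset.range n, Z ℓ ω with hTdef
  set W : Ω → ℝ := fun ω => T ω - γ with hWdef
  have hTmeas : Measurable T := Finset.measurable_sum _ (fun i _ => hmeasZ i)
  have hWmeas : Measurable W := hTmeas.sub measurable_const
  set r : Measure ℝ := μ.map W with hrdef
  haveI : IsProbabilityMeasure r := Measure.isProbabilityMeasure_map hWmeas.aemeasurable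
  have hindepZ : iIndepFun Z μ := iIndep_of_option hindep
  -- Independence of W and U
  have hmeasOpt : ∀ i : Option ℕ, Measurable ((fun i : Option ℕ => i.elim U Z) i) := by
    rintro (_ | ℓ)
    · exact hmeasU
    · exact hmeasZ ℓ
  have hTU : IndepFun T U μ := by
    have h0 := hindep.indepFun_finsetSum_of_notMem hmeasOpt
      (s := (Finset.range n).map ⟨some, Option.some_injective ℕ⟩) (i := none) (by simp)
    have hsum : (∑ j ∈ (Finset.range n).map ⟨some, Option.some_injective ℕ⟩,
        (fun i : Option ℕ => i.elim U Z) j) = T := by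
      funext ω
      rw [Finset.sum_apply, Finset.sum_map]
      simp [hTdef]
    rwa [hsum] at h0
  have hWU : IndepFun W U μ := by
    have := hTU.comp (φ := fun x : ℝ => x - γ) (ψ := id)
      (measurable_id.sub measurable_const) measurable_id
    exact this
  have hjoint : μ.map (fun ω => (W ω, U ω)) = r.prod (μ.map U) :=
    (indepFun_iff_map_prod_eq_prod_map_map hWmeas.aemeasurable hmeasU.aemeasurable).mp hWU
  -- LHS computation
  have hE : MeasurableSet {z : ℝ × ℝ | Real.log z.2 ≤ z.1} :=
    measurableSet_le (Real.measurable_log.comp measurable_snd) measurable_fst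
  have hAset : {ω | γ + Real.log (U ω) ≤ ∑ ℓ ∈ Finset.range n, Z ℓ ω}
      = (fun ω => (W ω, U ω)) ⁻¹' {z : ℝ × ℝ | Real.log z.2 ≤ z.1} := by
    ext ω
    simp only [mem_setOf_eq, mem_preimage, hWdef, hTdef]
    constructor <;> intro h <;> linarith
  have hmuA : μ {ω | γ + Real.log (U ω) ≤ ∑ ℓ ∈ Finset.range n, Z ℓ ω}
      = ∫⁻ s, ENNReal.ofReal (min 1 (rexp s)) ∂r := by
    rw [hAset, ← Measure.map_apply (hWmeas.prodMk hmeasU) hE, hjoint,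
      Measure.prod_apply hE]
    congr 1
    funext s
    have : (Prod.mk s ⁻¹' {z : ℝ × ℝ | Real.log z.2 ≤ z.1}) = {u | Real.log u ≤ s} := rfl
    rw [this, hU, unif_slice]
  have hgmeas : Measurable (fun s : ℝ => min 1 (rexp s)) :=
    measurable_const.min measurable_exp
  have hlhs : (μ {ω | γ + Real.log (U ω) ≤ ∑ ℓ ∈ Finset.range n, Z ℓ ω}).toReal
      = ∫ s, min 1 (rexp s) ∂r := by
    rw [hmuA, integral_eq_lintegral_of_nonneg_ae
      (ae_of_all _ fun s => le_min zero_le_one (exp_pos s).le) hgmeas.aestronglyMeasurable]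
  have hg_int : Integrable (fun s : ℝ => min 1 (rexp s)) r := by
    refine Integrable.mono' (integrable_const (1:ℝ)) hgmeas.aestronglyMeasurable
      (ae_of_all _ fun s => ?_)
    rw [Real.norm_eq_abs, abs_of_nonneg (le_min zero_le_one (exp_pos s).le)]
    exact min_le_left _ _
  have hsplit : ∫ s, min 1 (rexp s) ∂r
      = (r (Ici 0)).toReal + ∫ s in Iio (0:ℝ), rexp s ∂r := by
    rw [← integral_add_compl (measurableSet_Ici (a := (0:ℝ))) hg_int, compl_Ici]
    congr 1
    · rw [setIntegral_congr_fun measurableSet_Ici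
        (fun s hs => min_eq_left (Real.one_le_exp hs))]
      simp [setIntegral_const, measureReal_def]
    · exact setIntegral_congr_fun measurableSet_Iio
        (fun s hs => min_eq_right (Real.exp_le_one_iff.mpr (le_of_lt hs)))
  -- law of S
  set SV : Ω' → ℝ := fun ω' => ∑ ℓ ∈ Finset.range n, V ℓ ω' with hSVdef
  have hSVmeas : Measurable SV := Finset.measurable_sum _ (fun i _ => hmeasV i)
  have hsumW : (fun ω => ∑ ℓ ∈ Finset.range n, (Z ℓ ω - γ / n)) = W := by
    funext ω
    rw [Finset.sum_sub_distrib, Finset.sum_const, Finset.card_range, nsmul_eq_mul]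
    have hn0 : (n:ℝ) ≠ 0 := Nat.cast_ne_zero.mpr (Nat.one_le_iff_ne_zero.mp hn)
    field_simp [hWdef, hTdef]
    simp [hWdef, hTdef]
  have hlawS : ν.map SV = r.tilted (fun y => τ * y) := by
    have := law_sum_tilted (c := γ / n) hmeasZ hmeasV hindepZ hidentZ hmgf hindepV hlawV n
    rwa [hsumW] at this
  -- normalization constant
  set M := ∫ x, rexp (τ * x) ∂r with hMdef
  have hmgfT : ∫ ω, rexp (τ * T ω) ∂μ = (mgf (Z 0) μ τ) ^ n := by
    have h1 : ∫ ω, rexp (τ * T ω) ∂μ = mgf (∑ ℓ ∈ Finset.range n, Z ℓ) μ τ := by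
      simp only [mgf, Finset.sum_apply, hTdef]
    rw [h1, hindepZ.mgf_sum hmeasZ]
    have h2 : ∀ ℓ ∈ Finset.range n, mgf (Z ℓ) μ τ = mgf (Z 0) μ τ := by
      intro ℓ _
      simp only [mgf]
      exact ((hidentZ ℓ).comp hexpm).integral_eq
    rw [Finset.prod_congr rfl h2, Finset.prod_const, Finset.card_range]
  have hM : M = rexp ((n : ℝ) * cgf (Z 0) μ τ - τ * γ) := by
    rw [hMdef, hrdef, integral_map hWmeas.aemeasurable hexpm.aestronglyMeasurable]
    have h1 : ∀ ω, rexp (τ * W ω) = rexp (τ * T ω) * rexp (-(τ * γ)) := by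
      intro ω
      rw [← Real.exp_add]
      congr 1
      simp only [hWdef]
      ring
    simp_rw [h1]
    rw [integral_mul_const, hmgfT]
    rw [Real.exp_sub, Real.exp_neg]
    have hmgfpos : 0 < mgf (Z 0) μ τ := mgf_pos hmgf
    rw [cgf, Real.exp_nat_mul, Real.exp_log hmgfpos]
    rw [div_eq_mul_inv]
  -- RHS integrals
  have hIci : {ω' | 0 ≤ SV ω'} = SV ⁻¹' (Ici 0) := rfl
  have hIio : {ω' | SV ω' < 0} = SV ⁻¹' (Iio 0) := rfl
  have hI1 : ∫ ω' in {ω' | 0 ≤ SV ω'}, rexp (-τ * SV ω') ∂ν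
      = (r (Ici 0)).toReal * (1 / M) := by
    have e1 : ∫ ω' in {ω' | 0 ≤ SV ω'}, rexp (-τ * SV ω') ∂ν
        = ∫ y in Ici (0:ℝ), rexp (-τ * y) ∂(ν.map SV) := by
      rw [setIntegral_map (f := fun y : ℝ => rexp (-τ * y)) measurableSet_Ici
        (measurable_exp.comp (measurable_const_mul (-τ))).aestronglyMeasurable
        hSVmeas.aemeasurable, hIci]
    rw [e1, hlawS, setIntegral_tilted' _ _ measurableSet_Ici]
    have e2 : ∀ y : ℝ, (rexp (τ * y) / M) • rexp (-τ * y) = 1 / M := by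
      intro y
      rw [smul_eq_mul, div_mul_eq_mul_div, ← Real.exp_add]
      norm_num
    rw [setIntegral_congr_fun measurableSet_Ici (fun y _ => e2 y)]
    rw [setIntegral_const, smul_eq_mul, measureReal_def]
  have hI2 : ∫ ω' in {ω' | SV ω' < 0}, rexp ((1 - τ) * SV ω') ∂ν
      = (∫ s in Iio (0:ℝ), rexp s ∂r) * (1 / M) := by
    have e1 : ∫ ω' in {ω' | SV ω' < 0}, rexp ((1 - τ) * SV ω') ∂ν
        = ∫ y in Iio (0:ℝ), rexp ((1 - τ) * y) ∂(ν.map SV) := by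
      rw [setIntegral_map (f := fun y : ℝ => rexp ((1 - τ) * y)) measurableSet_Iio
        (measurable_exp.comp (measurable_const_mul (1 - τ))).aestronglyMeasurable
        hSVmeas.aemeasurable, hIio]
    rw [e1, hlawS, setIntegral_tilted' _ _ measurableSet_Iio]
    have e2 : ∀ y : ℝ, (rexp (τ * y) / M) • rexp ((1 - τ) * y) = rexp y * (1 / M) := by
      intro y
      rw [smul_eq_mul, div_mul_eq_mul_div, ← Real.exp_add, mul_one_div]
      have hy : τ * y + (1 - τ) * y = y := by ring
      rw [hy]
    rw [setIntegral_congr_fun measurableSet_Iio (fun y _ => e2 y)]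
    rw [integral_mul_const]
  -- put it together
  rw [hlhs, hsplit, hI1, hI2, ← hM]
  have hMpos : 0 < M := by rw [hM]; exact exp_pos _
  field_simp
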